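/- Let Δ be an obtuse basis of V and let A ⊆ C ⊆ Δ be subsets. (1) There exists a constant c > 0, depending only on V, Δ, A, C, such that for all H, X ∈ V with Γ_A^C(H, X) ≠ 0 one has ‖pr(H)‖ ≤ c‖pr(X)‖, where pr denotes the orthogonal projection onto V_A^C. (2) If X ∈ V satisfies ⟨α, X⟩ > 0 for every α ∈ Δ, then Γ_A^C(H, X) = 1 precisely when ⟨γ_A, H⟩ > 0 for every γ ∈ C∖A and ⟨ϖ_γ, H − X⟩ ≤ 0 for every γ ∈ C∖A (where (ϖ_γ)_{γ ∈ C∖A} is the dual basis Δ̂_A^C), and Γ_A^C(H, X) = 0 otherwise. -/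

import Mathlib

open scoped RealInnerProductSpace Classical

variable {V : Type*} [NormedAddCommGroup V] [InnerProductSpace ℝ V] [FiniteDimensional ℝ V]
  [DecidableEq V]

/-- The orthogonal projection of `γ` onto the orthogonal complement of the span of `A`
(denoted `γ_A`). -/
noncomputable def projPerp (A : Finset V) (γ : V) : V :=
  (Submodule.orthogonalProjectionOnto (Submodule.span ℝ (A : Set V))ᗮ γ : V)

/-- The characteristic function `τ_A^B` : equal to `1` if `⟪γ_A, H⟫ > 0` for every
`γ ∈ B \ A`, and `0` otherwise. -/
noncomputable def tauFn (A B : Finset V) (H : V) : ℝ :=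
  if ∀ γ ∈ B \ A, 0 < ⟪projPerp A γ, H⟫ then 1 else 0

/-- The characteristic function `τ̂_A^B` (relative to a family `ϖ` of dual bases):
equal to `1` if `⟪ϖ A B γ, H⟫ > 0` for every `γ ∈ B \ A`, and `0` otherwise. -/
noncomputable def tauHatFn (ϖ : Finset V → Finset V → V → V) (A B : Finset V) (H : V) : ℝ :=
  if ∀ γ ∈ B \ A, 0 < ⟪ϖ A B γ, H⟫ then 1 else 0

/-- `ϖ` is a family of dual bases: for all `A ⊆ B ⊆ Δ`, the family `(ϖ A B γ)_{γ ∈ B \ A}`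
is the dual basis `Δ̂_A^B` of `Δ_A^B = (γ_A)_{γ ∈ B \ A}` in
`V_A^B = span B ⊓ (span A)ᗮ`. -/
def IsDualFamily (Δ : Finset V) (ϖ : Finset V → Finset V → V → V) : Prop :=
  ∀ A B : Finset V, A ⊆ B → B ⊆ Δ → ∀ γ ∈ B \ A,
    (ϖ A B γ ∈ Submodule.span ℝ (B : Set V) ⊓ (Submodule.span ℝ (A : Set V))ᗮ) ∧
    ∀ δ ∈ B \ A, ⟪ϖ A B γ, projPerp A δ⟫ = if δ = γ then 1 else 0

/-- The function `Γ_A^C(H, X) = ∑_{B : A ⊆ B ⊆ C} (−1)^{|C∖B|} τ_A^B(H) τ̂_B^C(H − X)`. -/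
noncomputable def GammaFn (ϖ : Finset V → Finset V → V → V) (A C : Finset V) (H X : V) : ℝ :=
  ∑ B ∈ Finset.Icc A C, (-1 : ℝ) ^ (C \ B).card * (tauFn A B H * tauHatFn ϖ B C (H - X))

set_option linter.unusedSectionVars false
set_option linter.unnecessarySimpa false
set_option linter.unusedVariables false

lemma projPerp_mem_orthogonal (A : Finset V) (γ : V) :
    projPerp A γ ∈ (Submodule.span ℝ (A : Set V))ᗮ :=
  (Submodule.orthogonalProjectionOnto _ γ).2

lemma projPerp_eq (A : Finset V) (γ : V) :
    projPerp A γ = γ - (Submodule.orthogonalProjectionOnto (Submodule.span ℝ (A : Set V)) γ : V) := by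
  simp [projPerp, Submodule.starProjection_orthogonal_val]

lemma sub_projPerp_mem_span (A : Finset V) (γ : V) :
    γ - projPerp A γ ∈ Submodule.span ℝ (A : Set V) := by
  rw [projPerp_eq]
  simpa using (Submodule.orthogonalProjectionOnto (Submodule.span ℝ (A : Set V)) γ).2

lemma inner_projPerp_eq {A : Finset V} {w : V}
    (hw : w ∈ (Submodule.span ℝ (A : Set V))ᗮ) (γ : V) :
    ⟪projPerp A γ, w⟫ = ⟪γ, w⟫ := by
  have h := (Submodule.mem_orthogonal _ w).1 hw _ (sub_projPerp_mem_span A γ)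
  rw [inner_sub_left] at h
  linarith

lemma projPerp_eq_zero_of_mem {A : Finset V} {γ : V}
    (hγ : γ ∈ Submodule.span ℝ (A : Set V)) : projPerp A γ = 0 := by
  rw [projPerp_eq, ← Submodule.starProjection_apply, Submodule.starProjection_eq_self_iff.2 hγ, sub_self]

lemma projPerp_congr {A A' : Finset V}
    (h : Submodule.span ℝ (A : Set V) = Submodule.span ℝ (A' : Set V)) (γ : V) :
    projPerp A γ = projPerp A' γ := by
  rw [projPerp, ← Submodule.starProjection_apply]
  exact Submodule.eq_starProjection_of_mem_orthogonal (h ▸ projPerp_mem_orthogonal A' γ)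
    (by rw [Submodule.orthogonal_orthogonal, h]; exact sub_projPerp_mem_span A' γ)

lemma projPerp_empty (γ : V) : projPerp (∅ : Finset V) γ = γ := by
  rw [projPerp_eq]
  simp

lemma mem_orthogonal_span_of_forall {s : Set V} {v : V} (h : ∀ u ∈ s, ⟪u, v⟫ = 0) :
    v ∈ (Submodule.span ℝ s)ᗮ := by
  rw [Submodule.mem_orthogonal]
  intro u hu
  induction hu using Submodule.span_induction with
  | mem x hx => exact h x hx
  | zero => simp
  | add x y _ _ hx hy => rw [inner_add_left, hx, hy]; ring
  | smul a x _ hx => rw [inner_smul_left, hx]; simp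

lemma span_insert_eq_of_projPerp_eq_zero {A : Finset V} {α : V} (h : projPerp A α = 0) :
    Submodule.span ℝ ((insert α A : Finset V) : Set V) = Submodule.span ℝ (A : Set V) := by
  have hα : α ∈ Submodule.span ℝ (A : Set V) := by
    have := sub_projPerp_mem_span A α
    rwa [h, sub_zero] at this
  rw [Finset.coe_insert]
  exact Submodule.span_insert_eq_span hα

lemma projPerp_insert {A : Finset V} {α : V} (ha : projPerp A α ≠ 0) (γ : V) :
    projPerp (insert α A) γ = projPerp A γ -
      (⟪projPerp A γ, projPerp A α⟫ / ⟪projPerp A α, projPerp A α⟫) • projPerp A α := by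
  set a := projPerp A α with ha_def
  set g := projPerp A γ with hg_def
  set c : ℝ := ⟪g, a⟫ / ⟪a, a⟫ with hc
  have hat : (⟪a, a⟫ : ℝ) ≠ 0 := by
    simpa [inner_self_eq_zero] using ha
  have hv : g - c • a ∈ (Submodule.span ℝ ((insert α A : Finset V) : Set V))ᗮ := by
    apply mem_orthogonal_span_of_forall
    intro u hu
    rw [Finset.coe_insert] at hu
    rcases hu with h | hu
    · rw [h]
      have h1 : ⟪α - a, g - c • a⟫ = 0 := by
        have hmem : α - a ∈ Submodule.span ℝ (A : Set V) := sub_projPerp_mem_span A α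
        have hg' : g - c • a ∈ (Submodule.span ℝ (A : Set V))ᗮ :=
          Submodule.sub_mem _ (projPerp_mem_orthogonal A γ)
            (Submodule.smul_mem _ _ (projPerp_mem_orthogonal A α))
        exact (Submodule.mem_orthogonal _ _).1 hg' _ hmem
      have h2 : ⟪a, g - c • a⟫ = 0 := by
        rw [inner_sub_right, real_inner_smul_right, hc, div_mul_cancel₀ _ hat,
          real_inner_comm, sub_self]
      have := inner_sub_left (𝕜 := ℝ) α a (g - c • a)
      rw [h1, h2] at this
      linarith
    · have hmem : u ∈ Submodule.span ℝ (A : Set V) := Submodule.subset_span hu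
      have hg' : g - c • a ∈ (Submodule.span ℝ (A : Set V))ᗮ :=
        Submodule.sub_mem _ (projPerp_mem_orthogonal A γ)
          (Submodule.smul_mem _ _ (projPerp_mem_orthogonal A α))
      exact (Submodule.mem_orthogonal _ _).1 hg' _ hmem
  have hspan : Submodule.span ℝ (A : Set V) ≤
      Submodule.span ℝ ((insert α A : Finset V) : Set V) := by
    apply Submodule.span_mono
    rw [Finset.coe_insert]
    exact Set.subset_insert _ _
  have hsub : γ - (g - c • a) ∈ ((Submodule.span ℝ ((insert α A : Finset V) : Set V))ᗮ)ᗮ := by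
    rw [Submodule.orthogonal_orthogonal]
    have h1 : γ - g ∈ Submodule.span ℝ ((insert α A : Finset V) : Set V) :=
      hspan (sub_projPerp_mem_span A γ)
    have h2 : a ∈ Submodule.span ℝ ((insert α A : Finset V) : Set V) := by
      have hα : α ∈ Submodule.span ℝ ((insert α A : Finset V) : Set V) := by
        apply Submodule.subset_span; rw [Finset.coe_insert]; exact Set.mem_insert _ _
      have := hspan (sub_projPerp_mem_span A α)
      have : α - (α - a) ∈ Submodule.span ℝ ((insert α A : Finset V) : Set V) :=
        Submodule.sub_mem _ hα this
      simpa using this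
    have : (γ - g) + c • a ∈ Submodule.span ℝ ((insert α A : Finset V) : Set V) :=
      Submodule.add_mem _ h1 (Submodule.smul_mem _ _ h2)
    convert this using 1
    abel
  rw [projPerp, ← Submodule.starProjection_apply]
  exact Submodule.eq_starProjection_of_mem_orthogonal hv hsub

lemma inner_self_pos_of_ne_zero {a : V} (ha : a ≠ 0) : (0:ℝ) < ⟪a, a⟫ := by
  have h1 : (⟪a, a⟫ : ℝ) ≠ 0 := by simpa [inner_self_eq_zero] using ha
  exact lt_of_le_of_ne real_inner_self_nonneg (Ne.symm h1)

lemma obtuse_proj (Δ : Finset V)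
    (hobtuse : ∀ α ∈ Δ, ∀ β ∈ Δ, α ≠ β → ⟪α, β⟫ ≤ 0) :
    ∀ A : Finset V, A ⊆ Δ → ∀ γ ∈ Δ, ∀ δ ∈ Δ, γ ≠ δ →
      ⟪projPerp A γ, projPerp A δ⟫ ≤ 0 := by
  intro A
  induction A using Finset.induction_on with
  | empty =>
    intro _ γ hγ δ hδ hne
    rw [projPerp_empty, projPerp_empty]
    exact hobtuse γ hγ δ hδ hne
  | @insert α A' hα ih =>
    intro hsub γ hγ δ hδ hne
    have hA' : A' ⊆ Δ := fun x hx => hsub (Finset.mem_insert_of_mem hx)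
    have hαΔ : α ∈ Δ := hsub (Finset.mem_insert_self _ _)
    by_cases hγm : γ ∈ (insert α A' : Finset V)
    · rw [projPerp_eq_zero_of_mem (Submodule.subset_span hγm)]
      simp
    by_cases hδm : δ ∈ (insert α A' : Finset V)
    · rw [projPerp_eq_zero_of_mem (Submodule.subset_span hδm)]
      simp
    by_cases ha0 : projPerp A' α = 0
    · rw [projPerp_congr (span_insert_eq_of_projPerp_eq_zero ha0),
        projPerp_congr (span_insert_eq_of_projPerp_eq_zero ha0)]
      exact ih hA' γ hγ δ hδ hne
    · rw [projPerp_insert ha0, projPerp_insert ha0]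
      have hγα : γ ≠ α := fun h => hγm (h ▸ Finset.mem_insert_self _ _)
      have hδα : δ ≠ α := fun h => hδm (h ▸ Finset.mem_insert_self _ _)
      have hx : ⟪projPerp A' γ, projPerp A' α⟫ ≤ 0 := ih hA' γ hγ α hαΔ hγα
      have hy : ⟪projPerp A' δ, projPerp A' α⟫ ≤ 0 := ih hA' δ hδ α hαΔ hδα
      have hz : ⟪projPerp A' γ, projPerp A' δ⟫ ≤ 0 := ih hA' γ hγ δ hδ hne
      have ht : (0:ℝ) < ⟪projPerp A' α, projPerp A' α⟫ :=
        inner_self_pos_of_ne_zero ha0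
      set a := projPerp A' α
      set g := projPerp A' γ
      set d := projPerp A' δ
      set x : ℝ := ⟪g, a⟫
      set y : ℝ := ⟪d, a⟫
      set t : ℝ := ⟪a, a⟫
      have expand : ⟪g - (x / t) • a, d - (y / t) • a⟫ = ⟪g, d⟫ - x * y / t := by
        simp only [inner_sub_left, inner_sub_right, real_inner_smul_left, real_inner_smul_right]
        rw [real_inner_comm d a]
        field_simp
        rw [show ⟪d, a⟫ = y from rfl, show ⟪g, a⟫ = x from rfl, show ⟪a, a⟫ = t from rfl]
        ring
      rw [expand]
      have hxy : 0 ≤ x * y := by nlinarith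
      have : 0 ≤ x * y / t := div_nonneg hxy ht.le
      linarith

lemma projPerp_inner_pos (Δ : Finset V)
    (hobtuse : ∀ α ∈ Δ, ∀ β ∈ Δ, α ≠ β → ⟪α, β⟫ ≤ 0)
    {X : V} (hX : ∀ α ∈ Δ, 0 < ⟪α, X⟫) :
    ∀ A : Finset V, A ⊆ Δ → ∀ γ ∈ Δ, γ ∉ A → 0 < ⟪projPerp A γ, X⟫ := by
  intro A
  induction A using Finset.induction_on with
  | empty =>
    intro _ γ hγ _
    rw [projPerp_empty]
    exact hX γ hγ
  | @insert α A' hα ih =>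
    intro hsub γ hγ hγm
    have hA' : A' ⊆ Δ := fun x hx => hsub (Finset.mem_insert_of_mem hx)
    have hαΔ : α ∈ Δ := hsub (Finset.mem_insert_self _ _)
    have hγα : γ ≠ α := fun h => hγm (h ▸ Finset.mem_insert_self _ _)
    have hγA' : γ ∉ A' := fun h => hγm (Finset.mem_insert_of_mem h)
    by_cases ha0 : projPerp A' α = 0
    · rw [projPerp_congr (span_insert_eq_of_projPerp_eq_zero ha0)]
      exact ih hA' γ hγ hγA'
    · rw [projPerp_insert ha0]
      have hx : ⟪projPerp A' γ, projPerp A' α⟫ ≤ 0 :=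
        obtuse_proj Δ hobtuse A' hA' γ hγ α hαΔ hγα
      have ht : (0:ℝ) < ⟪projPerp A' α, projPerp A' α⟫ := inner_self_pos_of_ne_zero ha0
      have hgX : 0 < ⟪projPerp A' γ, X⟫ := ih hA' γ hγ hγA'
      have haX : 0 < ⟪projPerp A' α, X⟫ := ih hA' α hαΔ hα
      rw [inner_sub_left, real_inner_smul_left]
      have hc : ⟪projPerp A' γ, projPerp A' α⟫ / ⟪projPerp A' α, projPerp A' α⟫ ≤ 0 :=
        div_nonpos_of_nonpos_of_nonneg hx ht.le
      nlinarith

lemma projPerp_mem_span_of_le {A : Finset V} {K : Submodule ℝ V}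
    (hAK : Submodule.span ℝ (A : Set V) ≤ K) {δ : V} (hδ : δ ∈ K) :
    projPerp A δ ∈ K := by
  have h1 : δ - projPerp A δ ∈ K := hAK (sub_projPerp_mem_span A δ)
  have := Submodule.sub_mem K hδ h1
  simpa using this

lemma inner_orthogonal_eq_zero {K : Submodule ℝ V} {v u : V}
    (hv : v ∈ Kᗮ) (hu : u ∈ K) : ⟪v, u⟫ = 0 := by
  rw [real_inner_comm]
  exact (Submodule.mem_orthogonal _ _).1 hv u hu

lemma mem_span_projPerp {A C : Finset V} {w : V}
    (hw : w ∈ Submodule.span ℝ (C : Set V) ⊓ (Submodule.span ℝ (A : Set V))ᗮ) :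
    w ∈ Submodule.span ℝ (projPerp A '' ((C \ A : Finset V) : Set V)) := by
  set K := (Submodule.span ℝ (A : Set V))ᗮ
  set f : V →ₗ[ℝ] V := K.subtype.comp (K.orthogonalProjectionOnto).toLinearMap with hf
  have hfw : f w = w := by
    show (K.orthogonalProjectionOnto w : V) = w
    rw [← Submodule.starProjection_apply]
    exact Submodule.starProjection_eq_self_iff.2 hw.2
  have hfval : ∀ v : V, f v = projPerp A v := fun v => rfl
  have hmem : w ∈ Submodule.map f (Submodule.span ℝ (C : Set V)) := by
    rw [← hfw]
    exact Submodule.mem_map_of_mem hw.1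
  rw [Submodule.map_span] at hmem
  refine Submodule.span_le.2 ?_ hmem
  rintro x ⟨δ, hδ, rfl⟩
  by_cases hδA : δ ∈ A
  · have : f δ = 0 := by
      rw [hfval]
      exact projPerp_eq_zero_of_mem (Submodule.subset_span hδA)
    rw [this]
    exact Submodule.zero_mem _
  · rw [hfval]
    exact Submodule.subset_span ⟨δ, by simp [Finset.mem_sdiff, hδ, hδA], rfl⟩

lemma eq_zero_of_inner_projPerp_eq_zero {A C : Finset V} {d : V}
    (hd : d ∈ Submodule.span ℝ (C : Set V) ⊓ (Submodule.span ℝ (A : Set V))ᗮ)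
    (h : ∀ δ ∈ C \ A, ⟪d, projPerp A δ⟫ = 0) : d = 0 := by
  have hd1 : d ∈ Submodule.span ℝ (projPerp A '' ((C \ A : Finset V) : Set V)) :=
    mem_span_projPerp hd
  have hd2 : d ∈ (Submodule.span ℝ (projPerp A '' ((C \ A : Finset V) : Set V)))ᗮ := by
    apply mem_orthogonal_span_of_forall
    rintro u ⟨δ, hδ, rfl⟩
    rw [real_inner_comm]
    exact h δ (by simpa using hδ)
  have : ⟪d, d⟫ = 0 := (Submodule.mem_orthogonal _ _).1 hd2 d hd1
  exact inner_self_eq_zero.1 this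

lemma dual_coherence {Δ : Finset V} {ϖ : Finset V → Finset V → V → V}
    (hϖ : IsDualFamily Δ ϖ) {A B C : Finset V} (hAB : A ⊆ B) (hBC : B ⊆ C)
    (hCΔ : C ⊆ Δ) {γ : V} (hγ : γ ∈ C \ B) : ϖ B C γ = ϖ A C γ := by
  have hAC : A ⊆ C := hAB.trans hBC
  have hγC : γ ∈ C := (Finset.mem_sdiff.1 hγ).1
  have hγB : γ ∉ B := (Finset.mem_sdiff.1 hγ).2
  have hγA : γ ∈ C \ A := Finset.mem_sdiff.2 ⟨hγC, fun h => hγB (hAB h)⟩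
  have hB := hϖ B C hBC hCΔ γ hγ
  have hA := hϖ A C hAC hCΔ γ hγA
  have hspanAB : Submodule.span ℝ (A : Set V) ≤ Submodule.span ℝ (B : Set V) :=
    Submodule.span_mono (by exact_mod_cast hAB)
  have hmemB : ϖ B C γ ∈ Submodule.span ℝ (C : Set V) ⊓ (Submodule.span ℝ (A : Set V))ᗮ :=
    ⟨hB.1.1, Submodule.orthogonal_le hspanAB hB.1.2⟩
  have key : ∀ δ ∈ C \ A, ⟪ϖ B C γ - ϖ A C γ, projPerp A δ⟫ = 0 := by
    intro δ hδ
    have hδC : δ ∈ C := (Finset.mem_sdiff.1 hδ).1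
    have hδA : δ ∉ A := (Finset.mem_sdiff.1 hδ).2
    rw [inner_sub_left, hA.2 δ hδ]
    by_cases hδB : δ ∈ B
    · have hδγ : δ ≠ γ := fun h => hγB (h ▸ hδB)
      rw [if_neg hδγ]
      have h0 : ⟪ϖ B C γ, projPerp A δ⟫ = 0 :=
        inner_orthogonal_eq_zero hB.1.2
          (projPerp_mem_span_of_le hspanAB (Submodule.subset_span hδB))
      rw [h0, sub_zero]
    · have hδCB : δ ∈ C \ B := Finset.mem_sdiff.2 ⟨hδC, hδB⟩
      have hdiff : projPerp A δ - projPerp B δ ∈ Submodule.span ℝ (B : Set V) := by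
        have h1 := sub_projPerp_mem_span B δ
        have h2 := hspanAB (sub_projPerp_mem_span A δ)
        have := Submodule.sub_mem _ h1 h2
        simpa using this
      have h1 : ⟪ϖ B C γ, projPerp A δ - projPerp B δ⟫ = 0 :=
        inner_orthogonal_eq_zero hB.1.2 hdiff
      rw [inner_sub_right] at h1
      have h2 : ⟪ϖ B C γ, projPerp A δ⟫ = ⟪ϖ B C γ, projPerp B δ⟫ := by linarith
      rw [h2, hB.2 δ hδCB, sub_self]
  have := eq_zero_of_inner_projPerp_eq_zero
    (Submodule.sub_mem _ hmemB hA.1) key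
  have h := sub_eq_zero.1 this
  exact h

lemma projPerp_mem_W {A C : Finset V} (hAC : A ⊆ C) {δ : V} (hδ : δ ∈ C) :
    projPerp A δ ∈ Submodule.span ℝ (C : Set V) ⊓ (Submodule.span ℝ (A : Set V))ᗮ :=
  ⟨projPerp_mem_span_of_le (Submodule.span_mono (by exact_mod_cast hAC))
    (Submodule.subset_span hδ), projPerp_mem_orthogonal A δ⟩

variable {Δ : Finset V} {ϖ : Finset V → Finset V → V → V} {A C : Finset V}

lemma exp_pi (hϖ : IsDualFamily Δ ϖ) (hAC : A ⊆ C) (hCΔ : C ⊆ Δ) {Y : V}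
    (hY : Y ∈ Submodule.span ℝ (C : Set V) ⊓ (Submodule.span ℝ (A : Set V))ᗮ) :
    Y = ∑ δ ∈ C \ A, ⟪projPerp A δ, Y⟫ • ϖ A C δ := by
  set S := ∑ δ ∈ C \ A, ⟪projPerp A δ, Y⟫ • ϖ A C δ with hS
  have hSmem : S ∈ Submodule.span ℝ (C : Set V) ⊓ (Submodule.span ℝ (A : Set V))ᗮ :=
    Submodule.sum_mem _ (fun δ hδ => Submodule.smul_mem _ _ (hϖ A C hAC hCΔ δ hδ).1)
  have key : ∀ γ ∈ C \ A, ⟪Y - S, projPerp A γ⟫ = 0 := by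
    intro γ hγ
    rw [inner_sub_left]
    have hSe : ⟪S, projPerp A γ⟫ = ⟪projPerp A γ, Y⟫ := by
      rw [hS, sum_inner]
      have : ∀ δ ∈ C \ A,
          ⟪(⟪projPerp A δ, Y⟫ : ℝ) • ϖ A C δ, projPerp A γ⟫
            = if γ = δ then ⟪projPerp A δ, Y⟫ else 0 := by
        intro δ hδ
        rw [real_inner_smul_left, (hϖ A C hAC hCΔ δ hδ).2 γ hγ]
        by_cases h : γ = δ <;> simp [h]
      rw [Finset.sum_congr rfl this, Finset.sum_ite_eq, if_pos hγ]
    rw [hSe, real_inner_comm, sub_self]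
  have := eq_zero_of_inner_projPerp_eq_zero (Submodule.sub_mem _ hY hSmem) key
  have h := sub_eq_zero.1 this
  exact h

lemma norm_sq_expansion (hϖ : IsDualFamily Δ ϖ) (hAC : A ⊆ C) (hCΔ : C ⊆ Δ) {Y : V}
    (hY : Y ∈ Submodule.span ℝ (C : Set V) ⊓ (Submodule.span ℝ (A : Set V))ᗮ) :
    ⟪Y, Y⟫ = ∑ δ ∈ C \ A, ⟪projPerp A δ, Y⟫ * ⟪ϖ A C δ, Y⟫ := by
  have h := exp_pi hϖ hAC hCΔ hY
  have h2 : (⟪Y, Y⟫ : ℝ) = ⟪∑ δ ∈ C \ A, ⟪projPerp A δ, Y⟫ • ϖ A C δ, Y⟫ :=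
    congrArg (fun z => (⟪z, Y⟫ : ℝ)) h
  rw [h2, sum_inner]
  exact Finset.sum_congr rfl (fun δ _ => real_inner_smul_left _ _ _)

lemma exp_e (hϖ : IsDualFamily Δ ϖ) (hAC : A ⊆ C) (hCΔ : C ⊆ Δ) {Y : V}
    (hY : Y ∈ Submodule.span ℝ (C : Set V) ⊓ (Submodule.span ℝ (A : Set V))ᗮ) :
    Y = ∑ δ ∈ C \ A, ⟪ϖ A C δ, Y⟫ • projPerp A δ := by
  set S := ∑ δ ∈ C \ A, ⟪ϖ A C δ, Y⟫ • projPerp A δ with hS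
  have hSmem : S ∈ Submodule.span ℝ (C : Set V) ⊓ (Submodule.span ℝ (A : Set V))ᗮ :=
    Submodule.sum_mem _ (fun δ hδ =>
      Submodule.smul_mem _ _ (projPerp_mem_W hAC (Finset.mem_sdiff.1 hδ).1))
  have hd : Y - S ∈ Submodule.span ℝ (C : Set V) ⊓ (Submodule.span ℝ (A : Set V))ᗮ :=
    Submodule.sub_mem _ hY hSmem
  have key : ∀ γ ∈ C \ A, ⟪ϖ A C γ, Y - S⟫ = 0 := by
    intro γ hγ
    rw [inner_sub_right]
    have hSe : ⟪ϖ A C γ, S⟫ = ⟪ϖ A C γ, Y⟫ := by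
      rw [hS, inner_sum]
      have : ∀ δ ∈ C \ A,
          ⟪ϖ A C γ, (⟪ϖ A C δ, Y⟫ : ℝ) • projPerp A δ⟫
            = if γ = δ then ⟪ϖ A C δ, Y⟫ else 0 := by
        intro δ hδ
        rw [real_inner_smul_right, (hϖ A C hAC hCΔ γ hγ).2 δ hδ]
        by_cases h : δ = γ
        · subst h; simp
        · have h' : ¬(γ = δ) := fun hh => h hh.symm
          simp [h, h']
      rw [Finset.sum_congr rfl this, Finset.sum_ite_eq, if_pos hγ]
    rw [hSe, sub_self]
  have hzero : ⟪Y - S, Y - S⟫ = 0 := by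
    rw [norm_sq_expansion hϖ hAC hCΔ hd]
    apply Finset.sum_eq_zero
    intro δ hδ
    rw [key δ hδ, mul_zero]
  have := inner_self_eq_zero.1 hzero
  have h := sub_eq_zero.1 this
  exact h

lemma tau_eq_prod (A B : Finset V) (H : V) :
    tauFn A B H = ∏ γ ∈ B \ A, (if 0 < ⟪projPerp A γ, H⟫ then (1:ℝ) else 0) := by
  unfold tauFn
  by_cases h : ∀ γ ∈ B \ A, 0 < ⟪projPerp A γ, H⟫
  · rw [if_pos h]
    exact (Finset.prod_eq_one (fun γ hγ => if_pos (h γ hγ))).symm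
  · rw [if_neg h]
    push_neg at h
    obtain ⟨γ, hγ, hle⟩ := h
    exact (Finset.prod_eq_zero (f := fun γ => if 0 < ⟪projPerp A γ, H⟫ then (1:ℝ) else 0)
      hγ (if_neg (not_lt.2 hle))).symm

lemma tauHat_eq_prod (ϖ : Finset V → Finset V → V → V) (A B : Finset V) (H : V) :
    tauHatFn ϖ A B H = ∏ γ ∈ B \ A, (if 0 < ⟪ϖ A B γ, H⟫ then (1:ℝ) else 0) := by
  unfold tauHatFn
  by_cases h : ∀ γ ∈ B \ A, 0 < ⟪ϖ A B γ, H⟫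
  · rw [if_pos h]
    exact (Finset.prod_eq_one (fun γ hγ => if_pos (h γ hγ))).symm
  · rw [if_neg h]
    push_neg at h
    obtain ⟨γ, hγ, hle⟩ := h
    exact (Finset.prod_eq_zero (f := fun γ => if 0 < ⟪ϖ A B γ, H⟫ then (1:ℝ) else 0)
      hγ (if_neg (not_lt.2 hle))).symm

lemma gamma_eq_prod {Δ : Finset V} {ϖ : Finset V → Finset V → V → V}
    (hϖ : IsDualFamily Δ ϖ) {A C : Finset V} (hAC : A ⊆ C) (hCΔ : C ⊆ Δ) (H X : V) :
    GammaFn ϖ A C H X = ∏ γ ∈ C \ A,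
      ((if 0 < ⟪projPerp A γ, H⟫ then (1:ℝ) else 0) -
       (if 0 < ⟪ϖ A C γ, H - X⟫ then (1:ℝ) else 0)) := by
  have hrhs : ∏ γ ∈ C \ A,
      ((if 0 < ⟪projPerp A γ, H⟫ then (1:ℝ) else 0) -
       (if 0 < ⟪ϖ A C γ, H - X⟫ then (1:ℝ) else 0))
      = ∑ t ∈ (C \ A).powerset,
        (∏ γ ∈ t, (if 0 < ⟪projPerp A γ, H⟫ then (1:ℝ) else 0)) *
        ∏ γ ∈ (C \ A) \ t, (-(if 0 < ⟪ϖ A C γ, H - X⟫ then (1:ℝ) else 0)) := by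
    rw [← Finset.prod_add]
    exact Finset.prod_congr rfl (fun γ _ => by ring)
  rw [hrhs]
  unfold GammaFn
  refine Finset.sum_bij' (fun B _ => B \ A) (fun t _ => A ∪ t) ?_ ?_ ?_ ?_ ?_
  · intro B hB
    rw [Finset.mem_Icc] at hB
    exact Finset.mem_powerset.2 (Finset.sdiff_subset_sdiff hB.2 (le_refl _))
  · intro t ht
    rw [Finset.mem_powerset] at ht
    rw [Finset.mem_Icc]
    constructor
    · exact Finset.subset_union_left
    · exact Finset.union_subset hAC (ht.trans Finset.sdiff_subset)
  · intro B hB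
    rw [Finset.mem_Icc] at hB
    exact Finset.union_sdiff_of_subset hB.1
  · intro t ht
    rw [Finset.mem_powerset] at ht
    have hdisj : Disjoint A t :=
      Finset.disjoint_left.2 (fun x hx hxt => (Finset.mem_sdiff.1 (ht hxt)).2 hx)
    exact Finset.union_sdiff_cancel_left hdisj
  · intro B hB
    rw [Finset.mem_Icc] at hB
    obtain ⟨hAB, hBC⟩ := hB
    have hCB : C \ B = (C \ A) \ (B \ A) := by
      ext x
      simp only [Finset.mem_sdiff]
      constructor
      · intro ⟨hxC, hxB⟩
        exact ⟨⟨hxC, fun hxA => hxB (hAB hxA)⟩, fun h => hxB h.1⟩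
      · intro ⟨⟨hxC, hxA⟩, h⟩
        exact ⟨hxC, fun hxB => h ⟨hxB, hxA⟩⟩
    have htau : tauFn A B H = ∏ γ ∈ B \ A, (if 0 < ⟪projPerp A γ, H⟫ then (1:ℝ) else 0) :=
      tau_eq_prod A B H
    have htauhat : tauHatFn ϖ B C (H - X)
        = ∏ γ ∈ (C \ A) \ (B \ A), (if 0 < ⟪ϖ A C γ, H - X⟫ then (1:ℝ) else 0) := by
      rw [tauHat_eq_prod, ← hCB]
      exact Finset.prod_congr rfl (fun γ hγ => by
        rw [dual_coherence hϖ hAB hBC hCΔ hγ])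
    have hneg : ∏ γ ∈ (C \ A) \ (B \ A), (-(if 0 < ⟪ϖ A C γ, H - X⟫ then (1:ℝ) else 0))
        = (-1 : ℝ) ^ ((C \ A) \ (B \ A)).card *
          ∏ γ ∈ (C \ A) \ (B \ A), (if 0 < ⟪ϖ A C γ, H - X⟫ then (1:ℝ) else 0) := by
      rw [← Finset.prod_const, ← Finset.prod_mul_distrib]
      exact Finset.prod_congr rfl (fun γ _ => by ring)
    rw [htau, htauhat, hneg, hCB]
    ring

/-- (1) There is `c > 0` such that `Γ_A^C(H,X) ≠ 0` implies
`‖pr H‖ ≤ c ‖pr X‖` (`pr` the orthogonal projection onto `V_A^C`); (2) if `⟪α, X⟫ > 0` for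
all `α ∈ Δ`, then `Γ_A^C(H, X)` is the characteristic function of the set of `H` with
`⟪γ_A, H⟫ > 0` and `⟪ϖ_γ, H − X⟫ ≤ 0` for all `γ ∈ C∖A`. -/
theorem stmt_10
    (Δ : Finset V)
    (hli : LinearIndependent ℝ ((↑) : ↥(Δ : Set V) → V))
    (hspan : Submodule.span ℝ (Δ : Set V) = ⊤)
    (hobtuse : ∀ α ∈ Δ, ∀ β ∈ Δ, α ≠ β → ⟪α, β⟫ ≤ 0)
    (ϖ : Finset V → Finset V → V → V) (hϖ : IsDualFamily Δ ϖ)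
    (A C : Finset V) (hAC : A ⊆ C) (hCΔ : C ⊆ Δ) :
    (∃ c : ℝ, 0 < c ∧ ∀ H X : V, GammaFn ϖ A C H X ≠ 0 →
      ‖(Submodule.orthogonalProjectionOnto
          (Submodule.span ℝ (C : Set V) ⊓ (Submodule.span ℝ (A : Set V))ᗮ) H : V)‖ ≤
        c * ‖(Submodule.orthogonalProjectionOnto
          (Submodule.span ℝ (C : Set V) ⊓ (Submodule.span ℝ (A : Set V))ᗮ) X : V)‖) ∧
    (∀ X : V, (∀ α ∈ Δ, 0 < ⟪α, X⟫) → ∀ H : V,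
      GammaFn ϖ A C H X =
        if (∀ γ ∈ C \ A, 0 < ⟪projPerp A γ, H⟫) ∧
            (∀ γ ∈ C \ A, ⟪ϖ A C γ, H - X⟫ ≤ 0)
        then 1 else 0) := by
  set W : Submodule ℝ V :=
    Submodule.span ℝ (C : Set V) ⊓ (Submodule.span ℝ (A : Set V))ᗮ with hW
  have hinner : ∀ w ∈ W, ∀ v : V, ⟪w, (W.orthogonalProjectionOnto v : V)⟫ = ⟪w, v⟫ := by
    intro w hw v
    have hsub : v - (W.orthogonalProjectionOnto v : V) ∈ Wᗮ :=
      by rw [← Submodule.starProjection_apply]; exact Submodule.sub_starProjection_mem_orthogonal v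
    have h0 : ⟪w, v - (W.orthogonalProjectionOnto v : V)⟫ = 0 :=
      (Submodule.mem_orthogonal _ _).1 hsub w hw
    rw [inner_sub_right] at h0
    linarith
  constructor
  · -- Part 1
    set S : ℝ := ∑ γ ∈ C \ A, ‖projPerp A γ‖ * ‖ϖ A C γ‖ with hSdef
    have hS0 : 0 ≤ S :=
      Finset.sum_nonneg (fun γ _ => mul_nonneg (norm_nonneg _) (norm_nonneg _))
    refine ⟨1 + S, by linarith, ?_⟩
    intro H X hΓ
    rw [gamma_eq_prod hϖ hAC hCΔ] at hΓ
    set YH : V := (W.orthogonalProjectionOnto H : V) with hYH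
    set YX : V := (W.orthogonalProjectionOnto X : V) with hYX
    have hYHW : YH ∈ W := SetLike.coe_mem _
    have hkey : ∀ γ ∈ C \ A,
        ⟪projPerp A γ, YH⟫ * ⟪ϖ A C γ, YH⟫
          ≤ (‖projPerp A γ‖ * ‖ϖ A C γ‖) * (‖YH‖ * ‖YX‖) := by
      intro γ hγ
      have heW : projPerp A γ ∈ W := projPerp_mem_W hAC (Finset.mem_sdiff.1 hγ).1
      have hπW : ϖ A C γ ∈ W := (hϖ A C hAC hCΔ γ hγ).1
      have ha : ⟪projPerp A γ, YH⟫ = ⟪projPerp A γ, H⟫ := hinner _ heW H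
      have hb : ⟪ϖ A C γ, YH⟫ = ⟪ϖ A C γ, H⟫ := hinner _ hπW H
      have ht : ⟪ϖ A C γ, YX⟫ = ⟪ϖ A C γ, X⟫ := hinner _ hπW X
      have hfac : (if 0 < ⟪projPerp A γ, H⟫ then (1:ℝ) else 0) -
          (if 0 < ⟪ϖ A C γ, H - X⟫ then (1:ℝ) else 0) ≠ 0 := by
        intro h0
        exact hΓ (Finset.prod_eq_zero hγ h0)
      have hsplit : ⟪ϖ A C γ, H - X⟫ = ⟪ϖ A C γ, H⟫ - ⟪ϖ A C γ, X⟫ := inner_sub_right _ _ _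
      have h1 : ⟪projPerp A γ, H⟫ * ⟪ϖ A C γ, H⟫
          ≤ ⟪projPerp A γ, H⟫ * ⟪ϖ A C γ, X⟫ := by
        by_cases hp : 0 < ⟪projPerp A γ, H⟫
        · by_cases hq : 0 < ⟪ϖ A C γ, H - X⟫
          · exfalso; apply hfac; rw [if_pos hp, if_pos hq, sub_self]
          · rw [hsplit] at hq
            push_neg at hq
            nlinarith
        · by_cases hq : 0 < ⟪ϖ A C γ, H - X⟫
          · rw [hsplit] at hq
            push_neg at hp
            nlinarith
          · exfalso; apply hfac; rw [if_neg hp, if_neg hq, sub_self]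
      have h2 : ⟪projPerp A γ, H⟫ * ⟪ϖ A C γ, X⟫
          ≤ (‖projPerp A γ‖ * ‖ϖ A C γ‖) * (‖YH‖ * ‖YX‖) := by
        have ha' : |⟪projPerp A γ, YH⟫| ≤ ‖projPerp A γ‖ * ‖YH‖ :=
          abs_real_inner_le_norm _ _
        have ht' : |⟪ϖ A C γ, YX⟫| ≤ ‖ϖ A C γ‖ * ‖YX‖ := abs_real_inner_le_norm _ _
        rw [ha] at ha'
        rw [ht] at ht'
        have habs : ⟪projPerp A γ, H⟫ * ⟪ϖ A C γ, X⟫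
            ≤ |⟪projPerp A γ, H⟫| * |⟪ϖ A C γ, X⟫| := by
          rw [← abs_mul]
          exact le_abs_self _
        have := mul_le_mul ha' ht' (abs_nonneg _) (mul_nonneg (norm_nonneg _) (norm_nonneg _))
        calc ⟪projPerp A γ, H⟫ * ⟪ϖ A C γ, X⟫
            ≤ |⟪projPerp A γ, H⟫| * |⟪ϖ A C γ, X⟫| := habs
          _ ≤ (‖projPerp A γ‖ * ‖YH‖) * (‖ϖ A C γ‖ * ‖YX‖) := this
          _ = (‖projPerp A γ‖ * ‖ϖ A C γ‖) * (‖YH‖ * ‖YX‖) := by ring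
      rw [ha, hb]
      linarith
    have hnorm : ‖YH‖ * ‖YH‖ ≤ S * (‖YH‖ * ‖YX‖) := by
      have h1 : ⟪YH, YH⟫ = ∑ γ ∈ C \ A, ⟪projPerp A γ, YH⟫ * ⟪ϖ A C γ, YH⟫ :=
        norm_sq_expansion hϖ hAC hCΔ hYHW
      have h2 : ∑ γ ∈ C \ A, ⟪projPerp A γ, YH⟫ * ⟪ϖ A C γ, YH⟫
          ≤ ∑ γ ∈ C \ A, (‖projPerp A γ‖ * ‖ϖ A C γ‖) * (‖YH‖ * ‖YX‖) :=
        Finset.sum_le_sum hkey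
      rw [← Finset.sum_mul] at h2
      rw [← real_inner_self_eq_norm_mul_norm]
      rw [h1]
      exact h2
    by_cases h0 : ‖YH‖ = 0
    · rw [h0]
      positivity
    · have hpos : 0 < ‖YH‖ := lt_of_le_of_ne (norm_nonneg _) (Ne.symm h0)
      nlinarith [norm_nonneg YX]
  · -- Part 2
    intro X hX H
    rw [gamma_eq_prod hϖ hAC hCΔ]
    by_cases hcond : (∀ γ ∈ C \ A, 0 < ⟪projPerp A γ, H⟫) ∧
        (∀ γ ∈ C \ A, ⟪ϖ A C γ, H - X⟫ ≤ 0)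
    · rw [if_pos hcond]
      apply Finset.prod_eq_one
      intro γ hγ
      rw [if_pos (hcond.1 γ hγ), if_neg (not_lt.2 (hcond.2 γ hγ)), sub_zero]
    · rw [if_neg hcond]
      by_contra hne
      have hfac : ∀ γ ∈ C \ A, ¬(0 < ⟪projPerp A γ, H⟫ ↔ 0 < ⟪ϖ A C γ, H - X⟫) := by
        intro γ hγ hiff
        apply hne
        apply Finset.prod_eq_zero hγ
        by_cases hp : 0 < ⟪projPerp A γ, H⟫
        · rw [if_pos hp, if_pos (hiff.1 hp), sub_self]
        · rw [if_neg hp, if_neg (fun hq => hp (hiff.2 hq)), sub_self]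
      set Y : V := (W.orthogonalProjectionOnto (H - X) : V) with hYdef
      have hYW : Y ∈ W := SetLike.coe_mem _
      set T : Finset V := (C \ A).filter (fun γ => ¬ 0 < ⟪projPerp A γ, H⟫) with hT
      have hTsub : T ⊆ C \ A := Finset.filter_subset _ _
      have hTempty : T = ∅ := by
        by_contra hTne
        have hTne' : T.Nonempty := Finset.nonempty_of_ne_empty hTne
        -- facts about elements of T
        have hTfact : ∀ γ ∈ T, ⟪projPerp A γ, Y⟫ < 0 ∧ 0 < ⟪ϖ A C γ, Y⟫ := by
          intro γ hγ
          obtain ⟨hγCA, hp⟩ := Finset.mem_filter.1 hγ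
          have heW : projPerp A γ ∈ W := projPerp_mem_W hAC (Finset.mem_sdiff.1 hγCA).1
          have hπW : ϖ A C γ ∈ W := (hϖ A C hAC hCΔ γ hγCA).1
          have hq : 0 < ⟪ϖ A C γ, H - X⟫ := by
            by_contra hq
            exact hfac γ hγCA ⟨fun h => absurd h hp, fun h => absurd h hq⟩
          have hγΔ : γ ∈ Δ := hCΔ (Finset.mem_sdiff.1 hγCA).1
          have hγA : γ ∉ A := (Finset.mem_sdiff.1 hγCA).2
          have heX : 0 < ⟪projPerp A γ, X⟫ :=
            projPerp_inner_pos Δ hobtuse hX A (hAC.trans hCΔ) γ hγΔ hγA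
          have heY : ⟪projPerp A γ, Y⟫ = ⟪projPerp A γ, H⟫ - ⟪projPerp A γ, X⟫ := by
            rw [hinner _ heW (H - X), inner_sub_right]
          have hπY : ⟪ϖ A C γ, Y⟫ = ⟪ϖ A C γ, H - X⟫ := hinner _ hπW (H - X)
          constructor
          · rw [heY]
            push_neg at hp
            linarith
          · rw [hπY]; exact hq
        have hRfact : ∀ γ ∈ (C \ A) \ T, ⟪ϖ A C γ, Y⟫ ≤ 0 := by
          intro γ hγ
          obtain ⟨hγCA, hγT⟩ := Finset.mem_sdiff.1 hγ
          have hp : 0 < ⟪projPerp A γ, H⟫ := by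
            by_contra hp
            exact hγT (Finset.mem_filter.2 ⟨hγCA, hp⟩)
          have hq : ¬ 0 < ⟪ϖ A C γ, H - X⟫ := fun hq => hfac γ hγCA ⟨fun _ => hq, fun _ => hp⟩
          have hπW : ϖ A C γ ∈ W := (hϖ A C hAC hCΔ γ hγCA).1
          rw [hinner _ hπW (H - X)]
          exact not_lt.1 hq
        set Yp : V := ∑ γ ∈ T, ⟪ϖ A C γ, Y⟫ • projPerp A γ with hYp
        set Z : V := ∑ γ ∈ (C \ A) \ T, ⟪ϖ A C γ, Y⟫ • projPerp A γ with hZ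
        have hsum : Y = Z + Yp := by
          have h1 := exp_e hϖ hAC hCΔ hYW
          rw [← Finset.sum_sdiff hTsub] at h1
          exact h1
        have h1 : ⟪Yp, Y⟫ < 0 := by
          rw [hYp, sum_inner]
          have heach : ∀ γ ∈ T, ⟪(⟪ϖ A C γ, Y⟫ : ℝ) • projPerp A γ, Y⟫ < 0 := by
            intro γ hγ
            rw [real_inner_smul_left]
            obtain ⟨hneg, hpos⟩ := hTfact γ hγ
            exact mul_neg_of_pos_of_neg hpos hneg
          calc ∑ γ ∈ T, ⟪(⟪ϖ A C γ, Y⟫ : ℝ) • projPerp A γ, Y⟫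
              < ∑ γ ∈ T, (0:ℝ) := Finset.sum_lt_sum_of_nonempty hTne' heach
            _ = 0 := Finset.sum_const_zero
        have h2 : 0 ≤ ⟪Yp, Z⟫ := by
          rw [hYp, sum_inner]
          apply Finset.sum_nonneg
          intro γ hγ
          rw [real_inner_smul_left, hZ, inner_sum]
          apply mul_nonneg (hTfact γ hγ).2.le
          apply Finset.sum_nonneg
          intro δ hδ
          rw [real_inner_smul_right]
          have hδ0 : ⟪ϖ A C δ, Y⟫ ≤ 0 := hRfact δ hδ
          have hγΔ : γ ∈ Δ := hCΔ (Finset.mem_sdiff.1 (hTsub hγ)).1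
          have hδΔ : δ ∈ Δ := hCΔ (Finset.mem_sdiff.1 (Finset.mem_sdiff.1 hδ).1).1
          have hγδ : γ ≠ δ := fun h => (Finset.mem_sdiff.1 hδ).2 (h ▸ hγ)
          have hee : ⟪projPerp A γ, projPerp A δ⟫ ≤ 0 :=
            obtuse_proj Δ hobtuse A (hAC.trans hCΔ) γ hγΔ δ hδΔ hγδ
          nlinarith
        have h3 : ⟪Yp, Y⟫ = ⟪Yp, Z⟫ + ⟪Yp, Yp⟫ := by
          conv_lhs => rw [hsum]
          rw [inner_add_right]
        have h4 : (0:ℝ) ≤ ⟪Yp, Yp⟫ := real_inner_self_nonneg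
        linarith
      -- T empty: all p hold, hence all q fail, contradicting hcond
      apply hcond
      have hall : ∀ γ ∈ C \ A, 0 < ⟪projPerp A γ, H⟫ := by
        intro γ hγ
        by_contra hp
        have : γ ∈ T := Finset.mem_filter.2 ⟨hγ, hp⟩
        rw [hTempty] at this
        exact absurd this (Finset.notMem_empty γ)
      refine ⟨hall, ?_⟩
      intro γ hγ
      have hq : ¬ 0 < ⟪ϖ A C γ, H - X⟫ :=
        fun hq => hfac γ hγ ⟨fun _ => hq, fun _ => hall γ hγ⟩
      exact not_lt.1 hq
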